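/- For any α ∈ ℝ, ∫_{ℝ²} 2 φ₂(z; I₂) Φ(α z₁ z₂) dz = 1, where φ₂(·; I₂) is the standard bivariate normal density and Φ the standard normal CDF. -/

import Mathlib

open MeasureTheory Set Real

lemma acs_int_g : Integrable (fun t : ℝ => Real.exp (-t ^ 2 / 2)) := by
  have h := integrable_exp_neg_mul_sq (by norm_num : (0:ℝ) < 1/2)
  convert h using 2 with t
  ring_nf

lemma acs_total : (∫ t : ℝ, Real.exp (-t ^ 2 / 2)) = Real.sqrt (2 * π) := by
  have h := integral_gaussian (1/2 : ℝ)
  simp only [div_div_eq_mul_div, div_one] at h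
  calc (∫ t : ℝ, Real.exp (-t ^ 2 / 2)) = ∫ t : ℝ, Real.exp (-(1/2) * t ^ 2) := by
        congr 1; funext t; ring_nf
    _ = Real.sqrt (π / (1/2)) := integral_gaussian _
    _ = Real.sqrt (2 * π) := by norm_num; rw [mul_comm]

/-- The Arnold–Castillo–Sarabia density (equation 12): for any `α`,
`∫ 2 φ₂(z; I₂) Φ(α z₁ z₂) dz = 1`. -/
theorem acs_density_integral
    (α : ℝ)
    (φ₂ : ℝ × ℝ → ℝ)
    (hφ₂ : ∀ z : ℝ × ℝ, φ₂ z =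
      (2 * π)⁻¹ * Real.exp (-(z.1 ^ 2 + z.2 ^ 2) / 2))
    (Φ : ℝ → ℝ)
    (hΦ : ∀ x, Φ x = ∫ t in Iic x, (Real.sqrt (2 * π))⁻¹ * Real.exp (-t ^ 2 / 2)) :
    ∫ z : ℝ × ℝ, 2 * φ₂ z * Φ (α * z.1 * z.2) = 1 := by
  have sqrt_pos : (0:ℝ) < Real.sqrt (2 * π) := Real.sqrt_pos.2 (by positivity)
  set g : ℝ → ℝ := fun t => Real.exp (-t ^ 2 / 2) with hg
  have hgint : Integrable g := acs_int_g
  -- Φ x + Φ (-x) = 1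
  have hΦ_refl : ∀ x, Φ x + Φ (-x) = 1 := by
    intro x
    have h1 : Φ (-x) = ∫ t in Ioi x, (Real.sqrt (2 * π))⁻¹ * g t := by
      rw [hΦ]
      have h2 := integral_comp_neg_Iic (-x) (fun s => (Real.sqrt (2 * π))⁻¹ * g s)
      simp only [neg_neg] at h2
      rw [← h2]
      refine integral_congr_ae (Filter.Eventually.of_forall fun t => ?_)
      simp [hg, neg_sq]
    rw [hΦ x, h1, intervalIntegral.integral_Iic_add_Ioi
      ((hgint.const_mul _).integrableOn) ((hgint.const_mul _).integrableOn)]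
    rw [integral_const_mul, acs_total]
    field_simp
  -- Φ bounds
  have hΦ_nonneg : ∀ x, 0 ≤ Φ x := by
    intro x
    rw [hΦ]
    apply setIntegral_nonneg measurableSet_Iic
    intro t _; positivity
  have hΦ_le_one : ∀ x, Φ x ≤ 1 := by
    intro x
    have := hΦ_refl x
    nlinarith [hΦ_nonneg (-x)]
  have hΦ_mono : Monotone Φ := by
    intro a b hab
    rw [hΦ a, hΦ b]
    apply setIntegral_mono_set ((hgint.const_mul _).integrableOn)
    · filter_upwards with t; positivity
    · exact HasSubset.Subset.eventuallyLE (Iic_subset_Iic.2 hab)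
  have hΦ_meas : Measurable Φ := hΦ_mono.measurable
  -- integrability of φ₂
  have hφ₂_eq : ∀ z : ℝ × ℝ, φ₂ z = ((2 * π)⁻¹ * g z.1) * g z.2 := by
    intro z
    rw [hφ₂, hg]
    rw [show -(z.1 ^ 2 + z.2 ^ 2) / 2 = (-z.1 ^ 2 / 2) + (-z.2 ^ 2 / 2) by ring, Real.exp_add]
    ring
  have hφ₂_int : Integrable φ₂ := by
    have h := (hgint.const_mul ((2 * π)⁻¹)).mul_prod hgint
    rw [← Measure.volume_eq_prod] at h
    exact h.congr (Filter.Eventually.of_forall fun z => (hφ₂_eq z).symm)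
  have hφ₂_nonneg : ∀ z, 0 ≤ φ₂ z := by
    intro z; rw [hφ₂]; positivity
  -- integrability of the full integrands
  have key_int : ∀ β : ℝ, Integrable (fun z : ℝ × ℝ => 2 * φ₂ z * Φ (β * z.1 * z.2)) := by
    intro β
    have hmeas : AEStronglyMeasurable (fun z : ℝ × ℝ => Φ (β * z.1 * z.2)) volume := by
      exact (hΦ_meas.comp (by fun_prop)).aestronglyMeasurable
    have := ((hφ₂_int.const_mul 2).bdd_mul hmeas (c := 1) (Filter.Eventually.of_forall fun z => by
      rw [Real.norm_eq_abs, abs_le]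
      constructor
      · linarith [hΦ_nonneg (β * z.1 * z.2)]
      · exact hΦ_le_one _))
    exact this.congr (Filter.Eventually.of_forall fun z => by ring)
  -- the reflection identity for the product integral
  have refl_eq : (∫ z : ℝ × ℝ, 2 * φ₂ z * Φ (α * z.1 * z.2))
      = ∫ z : ℝ × ℝ, 2 * φ₂ z * Φ (-(α * z.1 * z.2)) := by
    have hI : Integrable (fun z : ℝ × ℝ => 2 * φ₂ z * Φ (α * z.1 * z.2))
        (volume.prod volume) := by
      rw [← Measure.volume_eq_prod]; exact key_int α
    have hJ : Integrable (fun z : ℝ × ℝ => 2 * φ₂ z * Φ (-(α * z.1 * z.2)))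
        (volume.prod volume) := by
      rw [← Measure.volume_eq_prod]
      have := key_int (-α)
      exact this.congr (Filter.Eventually.of_forall fun z => by ring_nf)
    rw [Measure.volume_eq_prod, integral_prod _ hI, integral_prod _ hJ]
    rw [← integral_neg_eq_self (fun x : ℝ => ∫ y : ℝ, 2 * φ₂ (x, y) * Φ (α * x * y)) volume]
    congr 1; funext x; congr 1; funext y
    have : φ₂ (-x, y) = φ₂ (x, y) := by rw [hφ₂, hφ₂]; ring_nf
    rw [this]; ring_nf
  -- total mass of φ₂
  have hφ₂_total : (∫ z : ℝ × ℝ, φ₂ z) = 1 := by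
    have heq : (∫ z : ℝ × ℝ, φ₂ z)
        = ∫ z : ℝ × ℝ, ((2 * π)⁻¹ * g z.1) * g z.2 ∂(volume.prod volume) := by
      rw [← Measure.volume_eq_prod]
      exact integral_congr_ae (Filter.Eventually.of_forall hφ₂_eq)
    rw [heq, integral_prod_mul (fun a => (2 * π)⁻¹ * g a) g, integral_const_mul, acs_total,
      mul_assoc, Real.mul_self_sqrt (by positivity : (0:ℝ) ≤ 2 * π)]
    exact inv_mul_cancel₀ (by positivity)
  -- combine
  have hsum : (∫ z : ℝ × ℝ, 2 * φ₂ z * Φ (α * z.1 * z.2))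
      + (∫ z : ℝ × ℝ, 2 * φ₂ z * Φ (-(α * z.1 * z.2))) = 2 := by
    have hJint : Integrable (fun z : ℝ × ℝ => 2 * φ₂ z * Φ (-(α * z.1 * z.2))) := by
      have := key_int (-α)
      exact this.congr (Filter.Eventually.of_forall fun z => by ring_nf)
    rw [← integral_add (key_int α) hJint]
    have : (fun z : ℝ × ℝ => 2 * φ₂ z * Φ (α * z.1 * z.2)
        + 2 * φ₂ z * Φ (-(α * z.1 * z.2))) = fun z => 2 * φ₂ z := by
      funext z
      have := hΦ_refl (α * z.1 * z.2)
      nlinarith [hφ₂_nonneg z]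
    rw [this, integral_const_mul, hφ₂_total]
    norm_num
  linarith [refl_eq, hsum]
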